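/- arXiv:2503.09909 — 2 statements merged into one kernel-verified Lean document; each statement's English description precedes it below -/
import Mathlib

section
/- Let n ≥ 1 and let J be the set of odd integers j with 1 ≤ j < 2^n. For each j ∈ J let σ_j : ℤ[X_{n-1}] → ℝ be a ring homomorphism with σ_j(X_{n-1}) = 2*cos(2πj/2^{n+1}), and set x_j = √(2 + 2*cos(2πj/2^{n+1})) (the extension of σ_j to X_n). Let s : J → {1, −1} and let a ∈ ℤ[X_{n-1}] satisfy Σ_{j∈J} (s_j·x_j − σ_j(a))² ≤ Σ_{j∈J} (s_j·x_j − σ_j(a'))² for every a' ∈ ℤ[X_{n-1}]. For j ∈ J set b_j = 2·x_j/|s_j·x_j − σ_j(a)| and C_j = log(√(b_j² + 1) + |b_j|). Suppose p, q ∈ ℤ[X_{n-1}] satisfy p² − X_n²·q² = 1, q divides p − 1 in ℤ[X_{n-1}], p·q > 0, and for every j ∈ J the sign s_j equals the sign of σ_j(p)·σ_j(q). Then there exists j ∈ J with |log|σ_j(p) + x_j·σ_j(q)|| ≤ C_j. -/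
/-- `X n = 2 cos(2π/2^(n+2))`. -/
noncomputable def X (n : ℕ) : ℝ := 2 * Real.cos (2 * Real.pi / 2 ^ (n + 2))

/-- Iterates of `z^2 - 2`. -/
noncomputable def EE : ℕ → Polynomial ℤ
  | 0 => Polynomial.X
  | (m+1) => (EE m).comp (Polynomial.X ^ 2 - Polynomial.C 2)

lemma EE_succ (m : ℕ) : EE (m+1) = (EE m).comp (Polynomial.X ^ 2 - Polynomial.C 2) := rfl

lemma EE_monic (m : ℕ) : (EE m).Monic := by
  induction m with
  | zero => exact Polynomial.monic_X
  | succ k ih =>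
    exact ih.comp (Polynomial.monic_X_pow_sub_C 2 (by norm_num))
      (by rw [Polynomial.natDegree_X_pow_sub_C]; norm_num)

lemma EE_natDegree (m : ℕ) : (EE m).natDegree = 2 ^ m := by
  induction m with
  | zero => simp [EE]
  | succ k ih =>
    rw [EE_succ, Polynomial.natDegree_comp, ih, Polynomial.natDegree_X_pow_sub_C]
    ring

lemma EE_aeval_cos (m : ℕ) (θ : ℝ) :
    Polynomial.aeval (2 * Real.cos θ) (EE m) = 2 * Real.cos (2 ^ m * θ) := by
  induction m generalizing θ with
  | zero => simp [EE]
  | succ k ih =>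
    rw [EE_succ, Polynomial.aeval_comp]
    have h1 : (Polynomial.aeval (2 * Real.cos θ)) ((Polynomial.X : Polynomial ℤ) ^ 2 - Polynomial.C 2)
        = 2 * Real.cos (2 * θ) := by
      simp only [map_sub, map_pow, Polynomial.aeval_X, Polynomial.aeval_C, Real.cos_two_mul,
        map_ofNat]
      ring
    rw [h1, ih]
    rw [show (2:ℝ)^k * (2*θ) = 2^(k+1) * θ by ring]

lemma EE_eval_two (m : ℕ) : (EE m).eval 2 = 2 := by
  induction m with
  | zero => simp [EE]
  | succ k ih => rw [EE_succ, Polynomial.eval_comp]; norm_num [ih]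

lemma EE_eval_neg_two (m : ℕ) : (EE (m+1)).eval (-2) = 2 := by
  rw [EE_succ, Polynomial.eval_comp]; norm_num [EE_eval_two]

lemma EE_coeff_zero (m : ℕ) : (EE (m+1)).coeff 0 = 2 ∨ (EE (m+1)).coeff 0 = -2 := by
  rw [Polynomial.coeff_zero_eq_eval_zero]
  cases m with
  | zero => right; rw [EE_succ, Polynomial.eval_comp]; simp [EE]
  | succ k => left; rw [EE_succ, Polynomial.eval_comp]; norm_num [EE_eval_neg_two]

lemma EE_map_two (m : ℕ) :
    (EE m).map (Int.castRingHom (ZMod 2)) = Polynomial.X ^ (2^m) := by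
  induction m with
  | zero => simp [EE]
  | succ k ih =>
    rw [EE_succ, Polynomial.map_comp, ih]
    have h1 : (Polynomial.X ^ 2 - Polynomial.C 2 : Polynomial ℤ).map (Int.castRingHom (ZMod 2))
        = Polynomial.X ^ 2 := by
      rw [Polynomial.map_sub, Polynomial.map_pow, Polynomial.map_X, Polynomial.map_C]
      have h0 : (Int.castRingHom (ZMod 2)) 2 = 0 := by
        simp only [map_ofNat]
        decide
      rw [h0, Polynomial.C_0, sub_zero]
    rw [h1, Polynomial.X_pow_comp, ← pow_mul]
    rw [show 2 * 2^k = 2^(k+1) by ring]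

lemma EE_coeff_even (m i : ℕ) (hi : i < 2^m) : (2:ℤ) ∣ (EE m).coeff i := by
  have h := congrArg (fun f => Polynomial.coeff f i) (EE_map_two m)
  simp only [Polynomial.coeff_map, Polynomial.coeff_X_pow] at h
  rw [if_neg (by omega : ¬ i = 2^m)] at h
  exact (ZMod.intCast_zmod_eq_zero_iff_dvd _ 2).mp h

lemma EE_irreducible (m : ℕ) : Irreducible (EE m) := by
  cases m with
  | zero => exact Polynomial.irreducible_X
  | succ k =>
    have hmonic := EE_monic (k+1)
    have hdeg := EE_natDegree (k+1)
    have heis : (EE (k+1)).IsEisensteinAt (Ideal.span {(2:ℤ)}) := {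
      leading := by
        rw [hmonic.leadingCoeff, Ideal.mem_span_singleton]
        norm_num
      mem := fun {i} hi => by
        rw [Ideal.mem_span_singleton]
        exact EE_coeff_even (k+1) i (hdeg ▸ hi)
      notMem := by
        rw [Ideal.span_singleton_pow, Ideal.mem_span_singleton]
        rcases EE_coeff_zero k with h | h <;> rw [h] <;> norm_num }
    exact heis.irreducible
      ((Ideal.span_singleton_prime (by norm_num)).mpr Int.prime_two)
      hmonic.isPrimitive (by rw [hdeg]; positivity)

lemma EE_minpoly (m : ℕ) (y : ℝ) (hy : Polynomial.aeval y (EE m) = 0) :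
    minpoly ℚ y = (EE m).map (Int.castRingHom ℚ) := by
  refine (minpoly.eq_of_irreducible_of_monic ?_ ?_ ?_).symm
  · exact (Polynomial.IsPrimitive.Int.irreducible_iff_irreducible_map_cast
      ((EE_monic m).isPrimitive)).mp (EE_irreducible m)
  · rwa [show Int.castRingHom ℚ = algebraMap ℤ ℚ from rfl,
      Polynomial.aeval_map_algebraMap]
  · exact (EE_monic m).map _

lemma EE_isIntegral (m : ℕ) (y : ℝ) (hy : Polynomial.aeval y (EE m) = 0) :
    IsIntegral ℚ y := by
  refine ⟨(EE m).map (Int.castRingHom ℚ), (EE_monic m).map _, ?_⟩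
  rw [show Int.castRingHom ℚ = algebraMap ℤ ℚ from rfl]
  rw [← Polynomial.aeval_def, Polynomial.aeval_map_algebraMap]
  exact hy

lemma EE_finrank (m : ℕ) (y : ℝ) (hy : Polynomial.aeval y (EE m) = 0) :
    Module.finrank ℚ (IntermediateField.adjoin ℚ ({y} : Set ℝ)) = 2 ^ m := by
  rw [IntermediateField.adjoin.finrank (EE_isIntegral m y hy), EE_minpoly m y hy,
    (EE_monic m).natDegree_map, EE_natDegree]

lemma EE_key (m : ℕ) (c xx : ℝ) (hc : Polynomial.aeval c (EE m) = 0)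
    (hcx : c = xx ^ 2 - 2) (hxm : xx ∈ IntermediateField.adjoin ℚ ({c} : Set ℝ)) : False := by
  have hxr : Polynomial.aeval xx (EE (m+1)) = 0 := by
    rw [EE_succ, Polynomial.aeval_comp]
    have h2 : (Polynomial.aeval xx) ((Polynomial.X : Polynomial ℤ) ^ 2 - Polynomial.C 2) = c := by
      rw [map_sub, map_pow, Polynomial.aeval_X, Polynomial.aeval_C, hcx]
      norm_num
    rw [h2]; exact hc
  have hcq : c ∈ IntermediateField.adjoin ℚ ({xx} : Set ℝ) := by
    rw [hcx]
    have hx' : xx ∈ IntermediateField.adjoin ℚ ({xx} : Set ℝ) :=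
      IntermediateField.mem_adjoin_simple_self ℚ xx
    refine sub_mem (pow_mem hx' 2) ?_
    have h2 : algebraMap ℚ ℝ 2 ∈ IntermediateField.adjoin ℚ ({xx} : Set ℝ) :=
      IntermediateField.algebraMap_mem _ 2
    simpa using h2
  have heq : IntermediateField.adjoin ℚ ({xx} : Set ℝ) = IntermediateField.adjoin ℚ ({c} : Set ℝ) :=
    le_antisymm (IntermediateField.adjoin_le_iff.mpr (Set.singleton_subset_iff.mpr hxm))
      (IntermediateField.adjoin_le_iff.mpr (Set.singleton_subset_iff.mpr hcq))
  have h1 := EE_finrank (m+1) xx hxr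
  have h2 := EE_finrank m c hc
  rw [heq, h2] at h1
  rw [pow_succ] at h1
  have hpos : 0 < (2:ℕ)^m := by positivity
  omega
lemma rep_mem (n' : ℕ) (σ : Algebra.adjoin ℤ ({X n'} : Set ℝ) →+* ℝ)
    (χ : Algebra.adjoin ℤ ({X n'} : Set ℝ)) (hχ : (χ : ℝ) = X n')
    (a : Algebra.adjoin ℤ ({X n'} : Set ℝ)) :
    σ a ∈ IntermediateField.adjoin ℚ ({σ χ} : Set ℝ) := by
  obtain ⟨P, hP⟩ : ∃ P : Polynomial ℤ, Polynomial.aeval (X n') P = (a : ℝ) := by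
    have h : (a : ℝ) ∈ (Polynomial.aeval (R := ℤ) (X n')).range := by
      rw [← Algebra.adjoin_singleton_eq_range_aeval]
      exact a.2
    exact h
  have ha : Polynomial.aeval χ P = a := by
    apply Subtype.coe_injective
    have h1 := Polynomial.aeval_algHom_apply
      (Algebra.adjoin ℤ ({X n'} : Set ℝ)).val χ P
    rw [show (Algebra.adjoin ℤ ({X n'} : Set ℝ)).val χ = (χ : ℝ) from rfl, hχ, hP] at h1
    exact h1.symm
  have hrep : σ a = Polynomial.aeval (σ χ) P := by
    have h2 := Polynomial.aeval_algHom_apply σ.toIntAlgHom χ P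
    rw [show σ.toIntAlgHom χ = σ χ from rfl, ha] at h2
    exact h2.symm
  set K := IntermediateField.adjoin ℚ ({σ χ} : Set ℝ) with hK
  have hcK : σ χ ∈ K := IntermediateField.mem_adjoin_simple_self ℚ (σ χ)
  have h3 := Polynomial.aeval_algHom_apply (K.val.toRingHom.toIntAlgHom) (⟨σ χ, hcK⟩ : K) P
  rw [show (K.val.toRingHom.toIntAlgHom) (⟨σ χ, hcK⟩ : K) = σ χ from rfl] at h3
  rw [hrep, h3]
  exact SetLike.coe_mem _

lemma Xsq (n : ℕ) (hn : 1 ≤ n) : X n ^ 2 = 2 + X (n - 1) := by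
  have h : n - 1 + 2 = n + 1 := by omega
  unfold X
  rw [h]
  have h2 : 2 * Real.pi / 2 ^ (n + 1) = 2 * (2 * Real.pi / 2 ^ (n + 2)) := by
    rw [pow_succ]
    have : (2:ℝ) ^ (n+1) ≠ 0 := by positivity
    field_simp
    ring
  rw [h2, Real.cos_two_mul]
  ring

lemma abs_add_of_mul_nonneg (a b : ℝ) (h : 0 ≤ a * b) : |a + b| = |a| + |b| := by
  rcases mul_nonneg_iff.mp h with ⟨ha, hb⟩ | ⟨ha, hb⟩
  · rw [abs_of_nonneg ha, abs_of_nonneg hb, abs_of_nonneg (by linarith)]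
  · rw [abs_of_nonpos ha, abs_of_nonpos hb, abs_of_nonpos (by linarith)]
    ring

set_option maxHeartbeats 1000000 in
lemma perj (P Q R xx t b Cc s : ℝ)
    (hx : 0 < xx)
    (hpell : P ^ 2 - xx ^ 2 * Q ^ 2 = 1)
    (hPR : P - 1 = Q * R)
    (hs : s = 1 ∨ s = -1)
    (hsgn : s = Real.sign (P * Q))
    (ht : t ≠ 0)
    (hb : b = 2 * xx / |t|)
    (hC : Cc = Real.log (Real.sqrt (b ^ 2 + 1) + |b|))
    (hH : Cc < |Real.log (|P + xx * Q|)|) :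
    (s * xx - R) ^ 2 < t ^ 2 := by
  have hs2 : s ^ 2 = 1 := by rcases hs with rfl | rfl <;> norm_num
  have habs_s : |s| = 1 := by rcases hs with rfl | rfl <;> norm_num
  have hPQ : P * Q ≠ 0 := by
    intro h
    rw [h, Real.sign_zero] at hsgn
    rcases hs with rfl | rfl <;> norm_num at hsgn
  have hsPQ : 0 < s * (P * Q) := by
    rcases lt_trichotomy (P * Q) 0 with hlt | heq | hgt
    · rw [Real.sign_of_neg hlt] at hsgn; rw [hsgn]; linarith
    · exact absurd heq hPQ
    · rw [Real.sign_of_pos hgt] at hsgn; rw [hsgn]; linarith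
  have hQ : Q ≠ 0 := fun h => hPQ (by rw [h, mul_zero])
  have habsP : 1 ≤ |P| := by
    nlinarith [sq_abs P, abs_nonneg P, sq_nonneg (xx * Q), sq_nonneg (xx*Q - 1)]
  set u := |P| + xx * |Q| with hu
  have hu1 : 1 ≤ u := le_add_of_le_of_nonneg habsP (by positivity)
  have hupos : (0:ℝ) < u := lt_of_lt_of_le one_pos hu1
  have hUV : (P + xx * Q) * (P - xx * Q) = 1 := by linear_combination hpell
  have hUVs : (P + s * xx * Q) * (P - s * xx * Q) = 1 := by
    linear_combination hpell - xx ^ 2 * Q ^ 2 * hs2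
  have hUsabs : |P + s * xx * Q| = u := by
    have h0 : 0 ≤ P * (s * xx * Q) := by nlinarith
    rw [abs_add_of_mul_nonneg _ _ h0]
    have : |s * xx * Q| = xx * |Q| := by
      rw [abs_mul, abs_mul, habs_s, abs_of_pos hx]; ring
    rw [this]
  have hVs_abs : |P - s * xx * Q| = u⁻¹ := by
    have h1 := congrArg abs hUVs
    rw [abs_mul, abs_one, hUsabs] at h1
    field_simp
    linarith [h1]
  have hVs_le : |P - s * xx * Q| ≤ 1 := by
    rw [hVs_abs, inv_eq_one_div, div_le_one hupos]
    exact hu1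
  have hUne : P + xx * Q ≠ 0 := by
    intro h; rw [h, zero_mul] at hUV; norm_num at hUV
  have hUabs : |P + xx * Q| = u ∨ |P + xx * Q| = u⁻¹ := by
    rcases hs with rfl | rfl
    · left; rw [← hUsabs]; ring_nf
    · right
      have h1 : |P - xx * Q| = u := by
        rw [← hUsabs]; ring_nf
      have h2 := congrArg abs hUV
      rw [abs_mul, abs_one, h1] at h2
      field_simp
      linarith [h2]
  have hlogU : |Real.log (|P + xx * Q|)| = Real.log u := by
    rcases hUabs with h | h
    · rw [h, abs_of_nonneg (Real.log_nonneg hu1)]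
    · rw [h, Real.log_inv, abs_neg, abs_of_nonneg (Real.log_nonneg hu1)]
  have habs_t : 0 < |t| := abs_pos.mpr ht
  have hbpos : 0 < b := by rw [hb]; exact div_pos (by linarith) habs_t
  have hsb1 : 1 ≤ Real.sqrt (b ^ 2 + 1) := by
    nlinarith [Real.sq_sqrt (show (0:ℝ) ≤ b ^ 2 + 1 by positivity),
      Real.sqrt_nonneg (b ^ 2 + 1)]
  have hlt : Real.sqrt (b ^ 2 + 1) + b < u := by
    have h1 : Real.log (Real.sqrt (b ^ 2 + 1) + |b|) < Real.log u := by
      rw [← hC, ← hlogU]; exact hH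
    rw [abs_of_pos hbpos] at h1
    exact (Real.log_lt_log_iff (by linarith) hupos).mp h1
  have hPsq : |P| = Real.sqrt (xx ^ 2 * Q ^ 2 + 1) := by
    rw [show xx ^ 2 * Q ^ 2 + 1 = P ^ 2 by linear_combination -hpell]
    rw [Real.sqrt_sq_eq_abs]
  have hxQ_b : b < xx * |Q| := by
    by_contra hle
    push_neg at hle
    have h3 : (xx * |Q|) ^ 2 ≤ b ^ 2 := by
      have := pow_le_pow_left₀ (by positivity : (0:ℝ) ≤ xx * |Q|) hle 2
      exact this
    have h2 : Real.sqrt (xx ^ 2 * Q ^ 2 + 1) ≤ Real.sqrt (b ^ 2 + 1) := by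
      apply Real.sqrt_le_sqrt
      nlinarith [sq_abs Q]
    rw [hu, hPsq] at hlt
    linarith
  have h2Qt : 2 < |Q| * |t| := by
    rw [hb, div_lt_iff₀ habs_t] at hxQ_b
    have h5 : xx * 2 < xx * (|Q| * |t|) := by linarith [hxQ_b]
    exact lt_of_mul_lt_mul_left h5 hx.le
  have hQt2 : 4 < Q ^ 2 * t ^ 2 := by
    have h6 : (2:ℝ) * 2 < (|Q| * |t|) * (|Q| * |t|) :=
      mul_lt_mul'' h2Qt h2Qt (by norm_num) (by norm_num)
    have h7 : (|Q| * |t|) * (|Q| * |t|) = Q ^ 2 * t ^ 2 := by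
      rw [show (|Q| * |t|) * (|Q| * |t|) = |Q| ^ 2 * |t| ^ 2 by ring, sq_abs, sq_abs]
    linarith
  have hkey : Q * (s * xx - R) = 1 - (P - s * xx * Q) := by linear_combination hPR
  have hfin : Q ^ 2 * (s * xx - R) ^ 2 ≤ 4 := by
    have h1 : (Q * (s * xx - R)) ^ 2 ≤ 4 := by
      rw [hkey]
      have h2 := abs_le.mp hVs_le
      nlinarith [h2.1, h2.2]
    nlinarith [h1]
  have hQ2 : 0 < Q ^ 2 := by
    have h1 : Q ^ 2 ≠ 0 := pow_ne_zero 2 hQ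
    exact (sq_nonneg Q).lt_of_ne (Ne.symm h1)
  have hmul : Q ^ 2 * (s * xx - R) ^ 2 < Q ^ 2 * t ^ 2 := lt_of_le_of_lt hfin hQt2
  exact lt_of_mul_lt_mul_left hmul hQ2.le
set_option maxHeartbeats 4000000 in
set_option synthInstance.maxHeartbeats 1000000 in
theorem stmt15 (n : ℕ) (hn : 1 ≤ n)
    (J : Finset ℕ) (hJ : ∀ j, j ∈ J ↔ Odd j ∧ 1 ≤ j ∧ j < 2 ^ n)
    (σ : ℕ → (Algebra.adjoin ℤ ({X (n - 1)} : Set ℝ) →+* ℝ))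
    (χ : Algebra.adjoin ℤ ({X (n - 1)} : Set ℝ)) (hχ : (χ : ℝ) = X (n - 1))
    (hσ : ∀ j ∈ J, σ j χ = 2 * Real.cos (2 * Real.pi * j / 2 ^ (n + 1)))
    (x : ℕ → ℝ)
    (hx : ∀ j ∈ J, x j = Real.sqrt (2 + 2 * Real.cos (2 * Real.pi * j / 2 ^ (n + 1))))
    (s : ℕ → ℝ) (hs : ∀ j ∈ J, s j = 1 ∨ s j = -1)
    (a : Algebra.adjoin ℤ ({X (n - 1)} : Set ℝ))
    (ha : ∀ a' : Algebra.adjoin ℤ ({X (n - 1)} : Set ℝ),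
      ∑ j ∈ J, (s j * x j - σ j a) ^ 2 ≤ ∑ j ∈ J, (s j * x j - σ j a') ^ 2)
    (b C : ℕ → ℝ)
    (hb : ∀ j ∈ J, b j = 2 * x j / |s j * x j - σ j a|)
    (hC : ∀ j ∈ J, C j = Real.log (Real.sqrt (b j ^ 2 + 1) + |b j|))
    (p q : Algebra.adjoin ℤ ({X (n - 1)} : Set ℝ))
    (hpell : (p : ℝ) ^ 2 - X n ^ 2 * (q : ℝ) ^ 2 = 1)
    (hdvd : q ∣ p - 1)
    (hpos : (p : ℝ) * (q : ℝ) > 0)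
    (hsign : ∀ j ∈ J, s j = Real.sign (σ j p * σ j q)) :
    ∃ j ∈ J, |Real.log (|σ j p + x j * σ j q|)| ≤ C j := by
  classical
  have hJ1 : 1 ∈ J := (hJ 1).mpr ⟨odd_one, le_refl 1, Nat.one_lt_two_pow (by omega)⟩
  by_contra hcon
  push_neg at hcon
  obtain ⟨r, hr⟩ := hdvd
  have hXsq : X n ^ 2 = 2 + X (n - 1) := Xsq n hn
  have e1 : (p ^ 2 - (1 + 1 + χ) * q ^ 2 : Algebra.adjoin ℤ ({X (n - 1)} : Set ℝ)) = 1 := by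
    apply Subtype.coe_injective
    push_cast [hχ]
    linear_combination hpell + (q : ℝ) ^ 2 * hXsq
  have hpell_j : ∀ j, (σ j p) ^ 2 - (2 + σ j χ) * (σ j q) ^ 2 = 1 := by
    intro j
    have h := congrArg (σ j) e1
    simp only [map_sub, map_mul, map_add, map_pow, map_one] at h
    linear_combination h
  have hPR_j : ∀ j, (σ j p) - 1 = (σ j q) * (σ j r) := by
    intro j
    have h := congrArg (σ j) hr
    simp only [map_sub, map_mul, map_one] at h
    linarith [h]
  have key : ∀ j ∈ J, (s j * x j - σ j r) ^ 2 < (s j * x j - σ j a) ^ 2 := by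
    intro j hj
    obtain ⟨hodd, hj1, hj2⟩ := (hJ j).mp hj
    obtain ⟨k, hk⟩ := hodd
    set φ := Real.pi * j / 2 ^ (n + 1) with hφ
    have hθ : 2 * Real.pi * (j : ℝ) / 2 ^ (n + 1) = 2 * φ := by rw [hφ]; ring
    have hφ0 : 0 < φ := by
      apply div_pos
      · have h1 : (1 : ℝ) ≤ (j : ℝ) := by exact_mod_cast hj1
        nlinarith [Real.pi_pos]
      · positivity
    have hφlt : φ < Real.pi / 2 := by
      rw [hφ, div_lt_div_iff₀ (by positivity) (by norm_num : (0:ℝ) < 2)]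
      have hj2' : (j : ℝ) < 2 ^ n := by exact_mod_cast hj2
      have h2 : (2 : ℝ) ^ (n + 1) = 2 ^ n * 2 := by ring
      nlinarith [Real.pi_pos]
    have hcos : 0 < Real.cos φ :=
      Real.cos_pos_of_mem_Ioo ⟨by nlinarith [Real.pi_pos], hφlt⟩
    have hxj : x j = 2 * Real.cos φ := by
      rw [hx j hj, hθ, Real.cos_two_mul]
      rw [show 2 + 2 * (2 * Real.cos φ ^ 2 - 1) = (2 * Real.cos φ) ^ 2 by ring]
      exact Real.sqrt_sq (by positivity)
    have hxpos : 0 < x j := by rw [hxj]; positivity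
    have hσχ : σ j χ = 2 * Real.cos (2 * φ) := by rw [hσ j hj, hθ]
    have hx2 : (x j) ^ 2 = 2 + σ j χ := by
      rw [hxj, hσχ, Real.cos_two_mul]; ring
    have hpow : (2 : ℝ) ^ (n - 1) * 2 = 2 ^ n := by
      rw [← pow_succ]
      congr 1
      omega
    have hcroot : Polynomial.aeval (σ j χ) (EE (n - 1)) = 0 := by
      rw [hσχ, EE_aeval_cos]
      have harg : (2 : ℝ) ^ (n - 1) * (2 * φ) = Real.pi * j / 2 := by
        have h1 : (2 : ℝ) ^ (n - 1) * (2 * φ) = ((2 : ℝ) ^ (n - 1) * 2) * φ := by ring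
        rw [h1, hpow, hφ, pow_succ]
        have h2n : (2 : ℝ) ^ n ≠ 0 := by positivity
        field_simp
      rw [harg]
      have hc0 : Real.cos (Real.pi * j / 2) = 0 := by
        rw [Real.cos_eq_zero_iff]
        refine ⟨(k : ℤ), ?_⟩
        push_cast [hk]
        ring
      rw [hc0]
      ring
    have hcx : σ j χ = (x j) ^ 2 - 2 := by rw [hx2]; ring
    have tne : s j * x j - σ j a ≠ 0 := by
      intro h0
      rcases hs j hj with hs1 | hs1
      · refine EE_key (n - 1) (σ j χ) (x j) hcroot hcx ?_
        have hxa : x j = σ j a := by rw [hs1] at h0; linarith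
        rw [hxa]
        exact rep_mem (n - 1) (σ j) χ hχ a
      · refine EE_key (n - 1) (σ j χ) (x j) hcroot hcx ?_
        have hxa : x j = σ j (-a) := by
          rw [map_neg]
          rw [hs1] at h0
          linarith
        rw [hxa]
        exact rep_mem (n - 1) (σ j) χ hχ (-a)
    have hpell_x : (σ j p) ^ 2 - (x j) ^ 2 * (σ j q) ^ 2 = 1 := by
      rw [hx2]
      exact hpell_j j
    exact perj (σ j p) (σ j q) (σ j r) (x j) (s j * x j - σ j a) (b j) (C j) (s j)
      hxpos hpell_x (hPR_j j) (hs j hj) (hsign j hj) tne (hb j hj) (hC j hj) (hcon j hj)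
  have hsum := ha r
  have hlt := Finset.sum_lt_sum_of_nonempty ⟨1, hJ1⟩ key
  linarith
end

section
/- Let n ≥ 1 and let J be the set of odd integers j with 1 ≤ j < 2^n. For each j ∈ J let σ_j : ℤ[X_{n-1}] → ℝ be a ring homomorphism with σ_j(X_{n-1}) = 2*cos(2πj/2^{n+1}), and set x_j = √(2 + 2*cos(2πj/2^{n+1})) (the extension of σ_j to X_n). Let s : J → {1, −1} and let a ∈ ℤ[X_{n-1}] satisfy Σ_{j∈J} (s_j·x_j − σ_j(a))² ≤ Σ_{j∈J} (s_j·x_j − σ_j(a'))² for every a' ∈ ℤ[X_{n-1}]. For j ∈ J set b_j = (x_j + 1)/|s_j·x_j − σ_j(a)| and C_j = log(√(b_j² + 1) + |b_j|). Suppose p, q ∈ ℤ[X_{n-1}] satisfy p² − X_n²·q² = −1, p divides q − 1 in ℤ[X_{n-1}], p divides X_n²·q − 1 in ℤ[X_{n-1}], p·q > 0, and for every j ∈ J the sign s_j equals the sign of σ_j(p)·σ_j(q). Then there exists j ∈ J with |log|σ_j(p) + x_j·σ_j(q)|| ≤ C_j. -/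
section Aux
open Polynomial

noncomputable def G : ℕ → Polynomial ℤ
  | 0 => Polynomial.X
  | (m+1) => G m ^ 2 - Polynomial.C 2

@[simp] lemma G_zero : G 0 = Polynomial.X := rfl
@[simp] lemma G_succ (m : ℕ) : G (m+1) = G m ^ 2 - Polynomial.C 2 := rfl

lemma G_monic_natDegree (m : ℕ) : (G m).Monic ∧ (G m).natDegree = 2 ^ m := by
  induction m with
  | zero => exact ⟨monic_X, natDegree_X⟩
  | succ m ih =>
    obtain ⟨hm, hd⟩ := ih
    have hsq : (G m ^ 2).Monic := hm.pow 2
    have hdsq : (G m ^ 2).natDegree = 2 ^ (m+1) := by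
      rw [natDegree_pow, hd]; ring
    have hlt : (Polynomial.C (2:ℤ)).natDegree < (G m ^ 2).natDegree := by
      rw [natDegree_C, hdsq]; positivity
    have hnd : (G m ^ 2 - Polynomial.C 2).natDegree = (G m ^ 2).natDegree :=
      natDegree_sub_eq_left_of_natDegree_lt hlt
    constructor
    · unfold Polynomial.Monic
      rw [G_succ, Polynomial.leadingCoeff, hnd]
      have h2 : (G m ^ 2 - Polynomial.C 2).coeff (G m ^ 2).natDegree
          = (G m ^ 2).coeff (G m ^ 2).natDegree - (Polynomial.C (2:ℤ)).coeff (G m ^2).natDegree := by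
        simp
      rw [h2, Polynomial.coeff_C, if_neg (by omega), sub_zero]
      exact hsq
    · rw [G_succ, hnd, hdsq]

lemma G_monic (m : ℕ) : (G m).Monic := (G_monic_natDegree m).1
lemma G_natDegree (m : ℕ) : (G m).natDegree = 2 ^ m := (G_monic_natDegree m).2

lemma G_map_two (m : ℕ) :
    (G m).map (Int.castRingHom (ZMod 2)) = Polynomial.X ^ (2 ^ m) := by
  induction m with
  | zero => simp
  | succ m ih =>
    rw [G_succ, Polynomial.map_sub, Polynomial.map_pow, ih, Polynomial.map_C]
    have h0 : ((Int.castRingHom (ZMod 2)) 2) = 0 := by decide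
    rw [h0, map_zero, sub_zero, ← pow_mul, ← pow_succ]

lemma G_eval_zero (m : ℕ) (hm : 1 ≤ m) : (G m).eval 0 = 2 ∨ (G m).eval 0 = -2 := by
  induction m with
  | zero => omega
  | succ m ih =>
    rcases Nat.eq_zero_or_pos m with h | h
    · subst h; right; simp
    · have := ih h
      left
      rw [G_succ, Polynomial.eval_sub, Polynomial.eval_pow, Polynomial.eval_C]
      rcases this with h2 | h2 <;> rw [h2] <;> norm_num

lemma G_coeff_mem (m : ℕ) {i : ℕ} (hi : i < 2 ^ m) :
    (G m).coeff i ∈ Ideal.span ({2} : Set ℤ) := by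
  have h := congrArg (fun f => Polynomial.coeff f i) (G_map_two m)
  simp only [Polynomial.coeff_map, Polynomial.coeff_X_pow] at h
  rw [if_neg (by omega)] at h
  rw [Ideal.mem_span_singleton]
  exact (ZMod.intCast_zmod_eq_zero_iff_dvd _ 2).1 h

lemma G_irreducible (m : ℕ) (hm : 1 ≤ m) : Irreducible (G m) := by
  have hP : (Ideal.span ({2} : Set ℤ)).IsPrime :=
    (Ideal.span_singleton_prime (by norm_num)).2 Int.prime_two
  apply Polynomial.irreducible_of_eisenstein_criterion hP
  · rw [(G_monic m).leadingCoeff, Ideal.mem_span_singleton]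
    norm_num
  · intro i hi
    apply G_coeff_mem m
    have hne := (G_monic m).ne_zero
    rw [Polynomial.degree_eq_natDegree hne, G_natDegree m, Nat.cast_lt] at hi
    exact hi
  · rw [Polynomial.degree_eq_natDegree (G_monic m).ne_zero, G_natDegree m]
    exact_mod_cast Nat.two_pow_pos m
  · rw [Ideal.span_singleton_pow, Ideal.mem_span_singleton]
    rw [Polynomial.coeff_zero_eq_eval_zero]
    rcases G_eval_zero m hm with h | h <;> rw [h] <;> norm_num
  · exact (G_monic m).isPrimitive

lemma coeff_one_sq {R : Type*} [CommRing R] (p : Polynomial R) :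
    (p ^ 2).coeff 1 = 2 * (p.coeff 0 * p.coeff 1) := by
  rw [pow_two, Polynomial.coeff_mul, Finset.Nat.sum_antidiagonal_eq_sum_range_succ_mk]
  simp [Finset.sum_range_succ]
  ring

/-- key impossibility: if `c` is a root of `G m` then `2 + c` is not a square in `ℤ[c]`. -/
lemma key_lemma (m : ℕ) (c : ℝ) (hc : Polynomial.aeval c (G m) = 0)
    (g : Polynomial ℤ) : (Polynomial.aeval c g) ^ 2 ≠ 2 + c := by
  intro hg
  rcases Nat.eq_zero_or_pos m with hm | hm
  · subst hm
    simp only [G_zero, Polynomial.aeval_X] at hc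
    subst hc
    rw [Polynomial.aeval_def, Polynomial.eval₂_at_zero] at hg
    have hgr : ((g.coeff 0 ^ 2 : ℤ) : ℝ) = ((2:ℤ):ℝ) := by push_cast; simpa using hg
    have h2 : (g.coeff 0) ^ 2 = 2 := by exact_mod_cast hgr
    have hub : g.coeff 0 ≤ 1 := by nlinarith [sq_nonneg (g.coeff 0 - 1)]
    have hlb : -1 ≤ g.coeff 0 := by nlinarith [sq_nonneg (g.coeff 0 + 1)]
    interval_cases h : (g.coeff 0) <;> norm_num at h2
  · -- minpoly of c is G m over ℚ
    set F := G m with hF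
    have hmon : F.Monic := G_monic m
    have hFQ : Irreducible (F.map (Int.castRingHom ℚ)) :=
      (Polynomial.IsPrimitive.Int.irreducible_iff_irreducible_map_cast hmon.isPrimitive).1 (G_irreducible m hm)
    have hcast : Int.castRingHom ℚ = algebraMap ℤ ℚ := rfl
    have haevalF : Polynomial.aeval c (F.map (algebraMap ℤ ℚ)) = 0 := by
      rw [Polynomial.aeval_map_algebraMap]; exact hc
    have hminpoly : F.map (algebraMap ℤ ℚ) = minpoly ℚ c :=
      minpoly.eq_of_irreducible_of_monic (hcast ▸ hFQ) haevalF (hmon.map _)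
    set H : Polynomial ℤ := g ^ 2 - Polynomial.X - Polynomial.C 2 with hH
    have haevalH : Polynomial.aeval c H = 0 := by
      have he : Polynomial.aeval c H = (Polynomial.aeval c g) ^ 2 - c - 2 := by
        rw [hH]; simp [map_ofNat]
      rw [he, hg]; ring
    -- H %ₘ F = 0
    have hR : H %ₘ F = 0 := by
      by_contra hR0
      have hRQ : (H %ₘ F).map (algebraMap ℤ ℚ) ≠ 0 := by
        rw [Ne, Polynomial.map_eq_zero_iff (algebraMap ℤ ℚ).injective_int]
        exact hR0
      have haevalR : Polynomial.aeval c ((H %ₘ F).map (algebraMap ℤ ℚ)) = 0 := by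
        rw [Polynomial.aeval_map_algebraMap]
        have h1 := congrArg (Polynomial.aeval c) (Polynomial.modByMonic_add_div H F)
        simp only [map_add, map_mul, hc, haevalH, zero_mul, add_zero] at h1
        exact h1
      have hdvd := minpoly.dvd ℚ c haevalR
      have hdeg := Polynomial.degree_le_of_dvd hdvd hRQ
      rw [← hminpoly] at hdeg
      have hdegmap : ((H %ₘ F).map (algebraMap ℤ ℚ)).degree = (H %ₘ F).degree :=
        Polynomial.degree_map_eq_of_injective (algebraMap ℤ ℚ).injective_int _
      have hdegF : (F.map (algebraMap ℤ ℚ)).degree = F.degree :=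
        Polynomial.degree_map_eq_of_injective (algebraMap ℤ ℚ).injective_int _
      have hlt := Polynomial.degree_modByMonic_lt H hmon
      rw [hdegmap, hdegF] at hdeg
      exact absurd (lt_of_le_of_lt hdeg hlt) (lt_irrefl _)
    have hFdvd : F ∣ H := (Polynomial.modByMonic_eq_zero_iff_dvd hmon).1 hR
    obtain ⟨D, hD⟩ := hFdvd
    -- reduce mod 2, compare coefficient 1
    have hmap := congrArg (Polynomial.map (Int.castRingHom (ZMod 2))) hD
    rw [Polynomial.map_mul, G_map_two] at hmap
    have hco := congrArg (fun f => Polynomial.coeff f 1) hmap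
    simp only [hH, Polynomial.map_sub, Polynomial.map_pow, Polynomial.map_X,
      Polynomial.map_C] at hco
    have h2m : ¬ (2 ^ m ≤ 1) := by
      have : 2 ≤ 2 ^ m := by
        calc 2 = 2 ^ 1 := by norm_num
        _ ≤ 2 ^ m := Nat.pow_le_pow_right (by norm_num) hm
      omega
    rw [Polynomial.coeff_sub, Polynomial.coeff_sub, coeff_one_sq, Polynomial.coeff_X_one,
      Polynomial.coeff_C, if_neg (by norm_num)] at hco
    rw [show (Polynomial.X ^ 2 ^ m * Polynomial.map (Int.castRingHom (ZMod 2)) D) =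
        (Polynomial.map (Int.castRingHom (ZMod 2)) D) * Polynomial.X ^ 2 ^ m by ring,
      Polynomial.coeff_mul_X_pow', if_neg h2m] at hco
    have : (2 : ZMod 2) = 0 := by decide
    rw [this] at hco
    simp at hco

lemma G_eval_cos (θ : ℝ) (i : ℕ) :
    Polynomial.aeval (2 * Real.cos θ) (G i) = 2 * Real.cos (2 ^ i * θ) := by
  induction i with
  | zero => simp
  | succ i ih =>
    rw [G_succ, map_sub, map_pow, ih]
    have h1 : Real.cos ((2:ℝ) ^ (i+1) * θ) = 2 * Real.cos ((2:ℝ)^i * θ) ^ 2 - 1 := by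
      rw [show (2:ℝ)^(i+1) * θ = 2 * ((2:ℝ)^i * θ) by ring, Real.cos_two_mul]
    rw [h1, Polynomial.aeval_C]
    have h2 : (algebraMap ℤ ℝ) 2 = (2:ℝ) := by norm_num
    rw [h2]; ring


lemma two_add_two_cos_nonneg (t : ℝ) : (0:ℝ) ≤ 2 + 2 * Real.cos t := by
  linarith [Real.neg_one_le_cos t]

set_option maxHeartbeats 4000000 in
lemma per_embedding (sj xj P Q bj Cj rj E c : ℝ)
    (hc2 : (0:ℝ) ≤ 2 + c)
    (hxj : xj = Real.sqrt (2 + c))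
    (hσpell : P ^ 2 - (2 + c) * Q ^ 2 = -1)
    (hsj : sj = 1 ∨ sj = -1)
    (hsignj : sj = Real.sign (P * Q))
    (hbj : bj = (xj + 1) / |rj|)
    (hCj : Cj = Real.log (Real.sqrt (bj ^ 2 + 1) + |bj|))
    (hconj : Cj < |Real.log (|P + xj * Q|)|)
    (hrj : rj ≠ 0)
    (hPE : P * E = (2 + c) * Q - 1) :
    |sj * xj - E| < |rj| := by
  have hx2 : xj ^ 2 = 2 + c := by rw [hxj]; exact Real.sq_sqrt hc2
  have hxnn : 0 ≤ xj := by rw [hxj]; exact Real.sqrt_nonneg _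
  have hpellj : P ^ 2 + 1 = xj ^ 2 * Q ^ 2 := by rw [hx2]; linarith
  have hs2 : sj ^ 2 = 1 := by rcases hsj with h1 | h1 <;> rw [h1] <;> norm_num
  have hPQ : P * Q ≠ 0 := by
    intro h0
    rw [hsignj, h0, Real.sign_zero] at hsj
    rcases hsj with h1 | h1 <;> norm_num at h1
  have hP : P ≠ 0 := left_ne_zero_of_mul hPQ
  have hQ : Q ≠ 0 := right_ne_zero_of_mul hPQ
  have hx0 : 0 < xj := by
    rcases hxnn.lt_or_eq with h1 | h1
    · exact h1
    · exfalso
      rw [← h1] at hpellj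
      simp at hpellj
      nlinarith [sq_nonneg P, hpellj]
  have hxQ : xj * |Q| = Real.sqrt (P ^ 2 + 1) := by
    rw [hpellj, show xj ^ 2 * Q ^ 2 = (xj * |Q|) ^ 2 by rw [mul_pow, sq_abs]]
    rw [Real.sqrt_sq (by positivity)]
  set L : ℝ := |P + xj * Q| with hL
  set M : ℝ := |P| + xj * |Q| with hM
  have hprod : (P + xj * Q) * (P - xj * Q) = -1 := by linear_combination hpellj
  have habs1 : L * |P - xj * Q| = 1 := by
    rw [hL, ← abs_mul, hprod]; norm_num
  have hLpos : 0 < L := by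
    rcases (abs_nonneg (P + xj * Q)).lt_or_eq with h1 | h1
    · exact h1
    · exfalso; rw [hL, ← h1] at habs1; simp at habs1
  have hle1 : L ≤ M := by
    rw [hL, hM]
    calc |P + xj * Q| ≤ |P| + |xj * Q| := abs_add_le _ _
    _ = |P| + xj * |Q| := by rw [abs_mul, abs_of_pos hx0]
  have hle2 : |P - xj * Q| ≤ M := by
    rw [hM]
    calc |P - xj * Q| ≤ |P| + |xj * Q| := abs_sub _ _
    _ = |P| + xj * |Q| := by rw [abs_mul, abs_of_pos hx0]
  have hMcase : L = M ∨ |P - xj * Q| = M := by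
    rcases lt_or_gt_of_ne hPQ with h1 | h1
    · right
      rcases mul_neg_iff.1 h1 with ⟨hP0, hQ0⟩ | ⟨hP0, hQ0⟩
      · rw [hM, abs_of_pos hP0, abs_of_neg hQ0,
          abs_of_pos (sub_pos.2 (lt_trans (mul_neg_of_pos_of_neg hx0 hQ0) hP0))]
        ring
      · rw [hM, abs_of_neg hP0, abs_of_pos hQ0,
          abs_of_neg (sub_neg.2 (lt_trans hP0 (mul_pos hx0 hQ0)))]
        ring
    · left
      rcases mul_pos_iff.1 h1 with ⟨hP0, hQ0⟩ | ⟨hP0, hQ0⟩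
      · rw [hL, hM, abs_of_pos hP0, abs_of_pos hQ0,
          abs_of_pos (add_pos hP0 (mul_pos hx0 hQ0))]
      · rw [hL, hM, abs_of_neg hP0, abs_of_neg hQ0,
          abs_of_neg (show P + xj * Q < 0 by nlinarith [mul_neg_of_pos_of_neg hx0 hQ0])]
        ring
  have hexp : Real.exp |Real.log L| = M := by
    rcases hMcase with h1 | h1
    · have h2 : |P - xj * Q| ≤ L := by rw [h1]; exact hle2
      have hL1 : 1 ≤ L := by
        nlinarith [habs1, mul_le_mul_of_nonneg_left h2 (le_of_lt hLpos), hLpos]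
      rw [abs_of_nonneg (Real.log_nonneg hL1), Real.exp_log hLpos]
      exact h1
    · have h2 : L ≤ |P - xj * Q| := by rw [h1]; exact hle1
      have hL1 : L ≤ 1 := by
        nlinarith [habs1, mul_le_mul_of_nonneg_left h2 (le_of_lt hLpos), hLpos]
      rw [abs_of_nonpos (Real.log_nonpos (le_of_lt hLpos) hL1), Real.exp_neg,
        Real.exp_log hLpos]
      rw [h1] at habs1
      have h3 : M * L = 1 := by rw [mul_comm]; exact habs1
      exact (eq_inv_of_mul_eq_one_left h3).symm
  have hMgt : Real.sqrt (bj ^ 2 + 1) + |bj| < M := by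
    have h1 : Real.exp Cj < Real.exp |Real.log L| := Real.exp_lt_exp.2 hconj
    rw [hexp, hCj, Real.exp_log (by positivity)] at h1
    exact h1
  have hbP : |bj| < |P| := by
    by_contra hle
    push_neg at hle
    have hsq' : P ^ 2 ≤ bj ^ 2 := by
      rw [← sq_abs P, ← sq_abs bj]
      exact pow_le_pow_left₀ (abs_nonneg P) hle 2
    have h1 : Real.sqrt (P ^ 2 + 1) ≤ Real.sqrt (bj ^ 2 + 1) :=
      Real.sqrt_le_sqrt (by linarith)
    rw [hM, hxQ] at hMgt
    linarith
  have hrabs : 0 < |rj| := abs_pos.2 hrj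
  have hbnn : 0 ≤ bj := by rw [hbj]; positivity
  have hxP : xj + 1 < |P| * |rj| := by
    have h1 : bj < |P| := by rwa [abs_of_nonneg hbnn] at hbP
    rwa [hbj, div_lt_iff₀ hrabs] at h1
  have hPle : |P| ≤ Real.sqrt (P ^ 2 + 1) := by
    rw [← Real.sqrt_sq_eq_abs]
    exact Real.sqrt_le_sqrt (by linarith)
  have hsqle : Real.sqrt (P ^ 2 + 1) ≤ |P| + 1 := by
    have h5 : P ^ 2 + 1 ≤ (|P| + 1) ^ 2 := by
      have h6 := sq_abs P
      nlinarith [abs_nonneg P]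
    calc Real.sqrt (P ^ 2 + 1) ≤ Real.sqrt ((|P| + 1) ^ 2) := Real.sqrt_le_sqrt h5
    _ = |P| + 1 := Real.sqrt_sq (by positivity)
  have habs2 : |sj * P - xj * Q| ≤ 1 := by
    have hcases : sj * P - xj * Q = |P| - Real.sqrt (P ^ 2 + 1)
        ∨ sj * P - xj * Q = Real.sqrt (P ^ 2 + 1) - |P| := by
      rcases hsj with hs1 | hs1
      · have hPQpos : 0 < P * Q := by
          rcases lt_or_gt_of_ne hPQ with h6 | h6
          · rw [hsignj, Real.sign_of_neg h6] at hs1; norm_num at hs1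
          · exact h6
        rcases mul_pos_iff.1 hPQpos with ⟨hP0, hQ0⟩ | ⟨hP0, hQ0⟩
        · left
          have hxQQ : xj * Q = Real.sqrt (P ^ 2 + 1) := by
            rw [← hxQ, abs_of_pos hQ0]
          rw [hs1, one_mul, abs_of_pos hP0, ← hxQQ]
        · right
          have hxQQ : xj * Q = -Real.sqrt (P ^ 2 + 1) := by
            rw [← hxQ, abs_of_neg hQ0]; ring
          rw [hs1, one_mul, abs_of_neg hP0, hxQQ]; ring
      · have hPQneg : P * Q < 0 := by
          rcases lt_or_gt_of_ne hPQ with h6 | h6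
          · exact h6
          · rw [hsignj, Real.sign_of_pos h6] at hs1; norm_num at hs1
        rcases mul_neg_iff.1 hPQneg with ⟨hP0, hQ0⟩ | ⟨hP0, hQ0⟩
        · right
          have hxQQ : xj * Q = -Real.sqrt (P ^ 2 + 1) := by
            rw [← hxQ, abs_of_neg hQ0]; ring
          rw [hs1, abs_of_pos hP0, hxQQ]; ring
        · left
          have hxQQ : xj * Q = Real.sqrt (P ^ 2 + 1) := by
            rw [← hxQ, abs_of_pos hQ0]
          rw [hs1, abs_of_neg hP0, hxQQ]; ring
    rcases hcases with h6 | h6 <;> rw [h6, abs_le] <;>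
      exact ⟨by linarith [hPle, hsqle], by linarith [hPle, hsqle]⟩
  have hPe : P * (sj * xj - E) = xj * (sj * P - xj * Q) + 1 := by
    calc P * (sj * xj - E) = sj * xj * P - P * E := by ring
    _ = sj * xj * P - ((2 + c) * Q - 1) := by rw [hPE]
    _ = xj * (sj * P - xj * Q) + 1 := by rw [← hx2]; ring
  have hePbound : |P| * |sj * xj - E| ≤ xj + 1 := by
    rw [← abs_mul, hPe]
    calc |xj * (sj * P - xj * Q) + 1| ≤ |xj * (sj * P - xj * Q)| + |1| := abs_add_le _ _
    _ = xj * |sj * P - xj * Q| + 1 := by rw [abs_mul, abs_of_pos hx0, abs_one]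
    _ ≤ xj * 1 + 1 := add_le_add_left (mul_le_mul_of_nonneg_left habs2 (le_of_lt hx0)) 1
    _ = xj + 1 := by rw [mul_one]
  have hfinal : |P| * |sj * xj - E| < |P| * |rj| := lt_of_le_of_lt hePbound hxP
  exact lt_of_mul_lt_mul_left hfinal (abs_nonneg P)

end Aux

set_option maxHeartbeats 1000000 in
set_option synthInstance.maxHeartbeats 200000 in
theorem stmt16 (n : ℕ) (hn : 1 ≤ n)
    (J : Finset ℕ) (hJ : ∀ j, j ∈ J ↔ Odd j ∧ 1 ≤ j ∧ j < 2 ^ n)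
    (σ : ℕ → (Algebra.adjoin ℤ ({X (n - 1)} : Set ℝ) →+* ℝ))
    (χ : Algebra.adjoin ℤ ({X (n - 1)} : Set ℝ)) (hχ : (χ : ℝ) = X (n - 1))
    (hσ : ∀ j ∈ J, σ j χ = 2 * Real.cos (2 * Real.pi * j / 2 ^ (n + 1)))
    (x : ℕ → ℝ)
    (hx : ∀ j ∈ J, x j = Real.sqrt (2 + 2 * Real.cos (2 * Real.pi * j / 2 ^ (n + 1))))
    (s : ℕ → ℝ) (hs : ∀ j ∈ J, s j = 1 ∨ s j = -1)
    (a : Algebra.adjoin ℤ ({X (n - 1)} : Set ℝ))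
    (ha : ∀ a' : Algebra.adjoin ℤ ({X (n - 1)} : Set ℝ),
      ∑ j ∈ J, (s j * x j - σ j a) ^ 2 ≤ ∑ j ∈ J, (s j * x j - σ j a') ^ 2)
    (b C : ℕ → ℝ)
    (hb : ∀ j ∈ J, b j = (x j + 1) / |s j * x j - σ j a|)
    (hC : ∀ j ∈ J, C j = Real.log (Real.sqrt (b j ^ 2 + 1) + |b j|))
    (p q : Algebra.adjoin ℤ ({X (n - 1)} : Set ℝ))
    (hpell : (p : ℝ) ^ 2 - X n ^ 2 * (q : ℝ) ^ 2 = -1)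
    (hdvd1 : p ∣ q - 1)
    (hdvd2 : p ∣ (2 + χ) * q - 1)
    (hpos : (p : ℝ) * (q : ℝ) > 0)
    (hsign : ∀ j ∈ J, s j = Real.sign (σ j p * σ j q)) :
    ∃ j ∈ J, |Real.log (|σ j p + x j * σ j q|)| ≤ C j := by
  by_contra hcon
  push_neg at hcon
  have hJ1 : 1 ∈ J := by
    rw [hJ 1]
    refine ⟨odd_one, le_refl 1, ?_⟩
    calc 1 < 2 := one_lt_two
    _ ≤ 2 ^ n := Nat.le_self_pow (by omega) 2
  -- the ring-level Pell equation
  have hXsq : X n ^ 2 = 2 + X (n - 1) := by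
    have hang : 2 * (2 * Real.pi / 2 ^ (n + 2)) = 2 * Real.pi / 2 ^ (n + 1) := by
      rw [show (2:ℝ) ^ (n + 2) = 2 ^ (n + 1) * 2 from pow_succ 2 (n + 1)]
      have h9 : ((2:ℝ)) ^ (n + 1) ≠ 0 := by positivity
      field_simp
    have hnn : (n - 1) + 2 = n + 1 := by omega
    have hcsq := Real.cos_sq (2 * Real.pi / 2 ^ (n + 2))
    unfold X
    rw [hnn, ← hang]
    nlinarith [hcsq]
  have hpq : p ^ 2 - (2 + χ) * q ^ 2 = -1 := by
    have hcoe : ((p ^ 2 - (2 + χ) * q ^ 2 + 1 : Algebra.adjoin ℤ ({X (n - 1)} : Set ℝ)) : ℝ) = 0 := by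
      push_cast
      have h2 : ((2 : Algebra.adjoin ℤ ({X (n - 1)} : Set ℝ)) : ℝ) = 2 := rfl
      rw [h2, hχ, ← hXsq]
      linarith [hpell]
    have h0 := (ZeroMemClass.coe_eq_zero).1 hcoe
    exact eq_neg_of_add_eq_zero_left h0
  obtain ⟨h, hh⟩ := hdvd2
  have key_j : ∀ j ∈ J, |s j * x j - σ j h| < |s j * x j - σ j a| := by
    intro j hj
    have hσj := hσ j hj
    have hc2 : (0:ℝ) ≤ 2 + 2 * Real.cos (2 * Real.pi * j / 2 ^ (n + 1)) :=
      two_add_two_cos_nonneg _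
    have hσpell : σ j p ^ 2
        - (2 + 2 * Real.cos (2 * Real.pi * j / 2 ^ (n + 1))) * σ j q ^ 2 = -1 := by
      have h1 := congrArg (σ j) hpq
      rw [map_sub, map_pow, map_mul, map_add, map_pow, map_neg, map_one, map_ofNat, hσj] at h1
      exact h1
    have hPE : σ j p * σ j h
        = (2 + 2 * Real.cos (2 * Real.pi * j / 2 ^ (n + 1))) * σ j q - 1 := by
      have h1 : σ j ((2 + χ) * q - 1)
          = (2 + 2 * Real.cos (2 * Real.pi * j / 2 ^ (n + 1))) * σ j q - 1 := by
        rw [map_sub, map_mul, map_add, map_ofNat, map_one, hσj]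
      rw [← map_mul, ← hh]
      exact h1
    have hrj : s j * x j - σ j a ≠ 0 := by
      intro h0
      have hσa : σ j a = s j * x j := (sub_eq_zero.1 h0).symm
      obtain ⟨y, hy, hya⟩ : ∃ y : ℝ, y ∈ Algebra.adjoin ℤ ({X (n - 1)} : Set ℝ) ∧ y = (a : ℝ) :=
        ⟨a, a.2, rfl⟩
      rw [Algebra.adjoin_singleton_eq_range_aeval] at hy
      obtain ⟨g, hg0⟩ := (AlgHom.mem_range _).1 hy
      have hg : Polynomial.aeval (X (n - 1)) g = (a : ℝ) := by rw [hg0]; exact hya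
      have hΦ : Polynomial.aeval χ g = a := by
        have hcoe2 : ((Polynomial.aeval χ g : Algebra.adjoin ℤ ({X (n - 1)} : Set ℝ)) : ℝ)
            = Polynomial.aeval ((χ : ℝ)) g :=
          (Polynomial.aeval_algHom_apply
            (Algebra.adjoin ℤ ({X (n - 1)} : Set ℝ)).val χ g).symm
        apply Subtype.coe_injective
        show ((Polynomial.aeval χ g : Algebra.adjoin ℤ ({X (n - 1)} : Set ℝ)) : ℝ) = (a : ℝ)
        rw [hcoe2, hχ]
        exact hg
      have hσg : σ j a = Polynomial.aeval (2 * Real.cos (2 * Real.pi * j / 2 ^ (n + 1))) g := by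
        rw [← hΦ, Polynomial.aeval_def, Polynomial.aeval_def, Polynomial.hom_eval₂, hσj]
        congr 1
        exact Subsingleton.elim _ _
      have hs2 : s j ^ 2 = 1 := by rcases hs j hj with h1 | h1 <;> rw [h1] <;> norm_num
      have hx2 : x j ^ 2 = 2 + 2 * Real.cos (2 * Real.pi * j / 2 ^ (n + 1)) := by
        rw [hx j hj]; exact Real.sq_sqrt hc2
      have hsq : (Polynomial.aeval (2 * Real.cos (2 * Real.pi * j / 2 ^ (n + 1))) g) ^ 2
          = 2 + 2 * Real.cos (2 * Real.pi * j / 2 ^ (n + 1)) := by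
        rw [← hσg, hσa, mul_pow, hs2, one_mul, hx2]
      have hroot : Polynomial.aeval (2 * Real.cos (2 * Real.pi * j / 2 ^ (n + 1))) (G (n - 1)) = 0 := by
        have hcos := G_eval_cos (2 * Real.pi * j / 2 ^ (n + 1)) (n - 1)
        rw [hcos]
        obtain ⟨k, hk⟩ := ((hJ j).1 hj).1
        have hang2 : (2:ℝ) ^ (n - 1) * (2 * Real.pi * j / 2 ^ (n + 1))
            = (2 * (k : ℤ) + 1) * Real.pi / 2 := by
          have hpow : (2:ℝ) ^ (n + 1) = 2 ^ (n - 1) * 2 ^ 2 := by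
            rw [← pow_add]
            congr 1
            omega
          have hne : ((2:ℝ)) ^ (n - 1) ≠ 0 := by positivity
          rw [hpow, hk]
          push_cast
          field_simp
        rw [hang2, Real.cos_eq_zero_iff.2 ⟨k, rfl⟩]
        ring
      exact key_lemma (n - 1) (2 * Real.cos (2 * Real.pi * j / 2 ^ (n + 1))) hroot g hsq
    exact per_embedding (s j) (x j) (σ j p) (σ j q) (b j) (C j) (s j * x j - σ j a) (σ j h)
      (2 * Real.cos (2 * Real.pi * j / 2 ^ (n + 1))) hc2 (hx j hj) hσpell (hs j hj)
      (hsign j hj) (hb j hj) (hC j hj) (hcon j hj) hrj hPE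
  have hlt : ∑ j ∈ J, (s j * x j - σ j h) ^ 2 < ∑ j ∈ J, (s j * x j - σ j a) ^ 2 := by
    apply Finset.sum_lt_sum_of_nonempty ⟨1, hJ1⟩
    intro j hj
    calc (s j * x j - σ j h) ^ 2 = |s j * x j - σ j h| ^ 2 := (sq_abs _).symm
    _ < |s j * x j - σ j a| ^ 2 := by
        apply pow_lt_pow_left₀ (key_j j hj) (abs_nonneg _)
        norm_num
    _ = (s j * x j - σ j a) ^ 2 := sq_abs _
  exact absurd (ha h) (not_le.2 hlt)
end
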